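/- If g : ℝ^d → ℝ is nonnegative, differentiable, and α-smooth (its gradient is α-Lipschitz), then for every w ∈ ℝ^d, ‖∇g(w)‖² ≤ 2α · g(w). -/

import Mathlib

open intervalIntegral in
theorem self_bounding_property (d : ℕ) (α : ℝ) (hα : 0 < α)
    (g : EuclideanSpace ℝ (Fin d) → ℝ)
    (hdiff : Differentiable ℝ g)
    (hnn : ∀ w, 0 ≤ g w)
    (hsmooth : ∀ w w', ‖gradient g w - gradient g w'‖ ≤ α * ‖w - w'‖) :
    ∀ w, ‖gradient g w‖ ^ 2 ≤ 2 * α * g w := by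
  -- first a descent lemma
  have hgradcont : Continuous (gradient g) := by
    refine (LipschitzWith.of_dist_le_mul (K := Real.toNNReal α) ?_).continuous
    intro x y
    rw [Real.coe_toNNReal _ hα.le, dist_eq_norm, dist_eq_norm]
    exact hsmooth x y
  have descent : ∀ w v : EuclideanSpace ℝ (Fin d),
      g (w + v) ≤ g w + inner ℝ (gradient g w) v + α / 2 * ‖v‖ ^ 2 := by
    intro w v
    set φ' : ℝ → ℝ := fun t => inner ℝ (gradient g (w + t • v)) v with hφ'
    have hderiv : ∀ t : ℝ, HasDerivAt (fun t : ℝ => g (w + t • v)) (φ' t) t := by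
      intro t
      have h1 : HasDerivAt (fun t : ℝ => w + t • v) v t := by
        simpa using ((hasDerivAt_id t).smul_const v).const_add w
      have h2 := ((hdiff (w + t • v)).hasGradientAt).hasFDerivAt
      have := h2.comp_hasDerivAt t h1
      simpa [hφ', Function.comp_def] using this
    have hcont : Continuous φ' := by
      apply Continuous.inner ?_ continuous_const
      exact hgradcont.comp (continuous_const.add (continuous_id.smul continuous_const))
    have hFTC : ∫ t in (0:ℝ)..1, φ' t = g (w + v) - g w := by
      have := integral_eq_sub_of_hasDerivAt (f := fun t : ℝ => g (w + t • v))
        (f' := φ') (a := 0) (b := 1) (fun t _ => hderiv t)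
        (hcont.intervalIntegrable 0 1)
      simpa using this
    have hbound : ∫ t in (0:ℝ)..1, φ' t ≤
        ∫ t in (0:ℝ)..1, (inner ℝ (gradient g w) v + α * t * ‖v‖ ^ 2) := by
      apply integral_mono_on (by norm_num) (hcont.intervalIntegrable 0 1)
        ((by fun_prop : Continuous fun t : ℝ => (inner ℝ (gradient g w) v : ℝ)
          + α * t * ‖v‖ ^ 2).intervalIntegrable 0 1)
      intro t ht
      have key : φ' t - inner ℝ (gradient g w) v ≤ α * t * ‖v‖ ^ 2 := by
        have : φ' t - inner ℝ (gradient g w) v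
            = inner ℝ (gradient g (w + t • v) - gradient g w) v := by
          rw [inner_sub_left]
        rw [this]
        calc inner ℝ (gradient g (w + t • v) - gradient g w) v
            ≤ ‖gradient g (w + t • v) - gradient g w‖ * ‖v‖ :=
              real_inner_le_norm _ _
          _ ≤ (α * ‖(w + t • v) - w‖) * ‖v‖ := by
              gcongr; exact hsmooth _ _
          _ = α * t * ‖v‖ ^ 2 := by
              rw [show (w + t • v) - w = t • v by abel, norm_smul]
              rw [Real.norm_eq_abs, abs_of_nonneg ht.1]
              ring
      linarith
    have hint : ∫ t in (0:ℝ)..1, (inner ℝ (gradient g w) v + α * t * ‖v‖ ^ 2)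
        = inner ℝ (gradient g w) v + α / 2 * ‖v‖ ^ 2 := by
      rw [integral_add (continuous_const.intervalIntegrable 0 1)
        ((by fun_prop : Continuous fun t : ℝ =>
          α * t * ‖v‖ ^ 2).intervalIntegrable 0 1),
        show (fun t : ℝ => α * t * ‖v‖ ^ 2) = fun t : ℝ => t * (α * ‖v‖ ^ 2)
          from funext fun t => by ring,
        integral_mul_const, integral_id, integral_const]
      norm_num
      ring
    rw [hFTC, hint] at hbound
    linarith
  -- now apply with v = -(1/α) • ∇g w
  intro w
  have h := descent w (-(α⁻¹ • gradient g w))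
  have h0 := hnn (w + -(α⁻¹ • gradient g w))
  rw [inner_neg_right, inner_smul_right, real_inner_self_eq_norm_sq,
    norm_neg, norm_smul] at h
  rw [Real.norm_eq_abs, abs_of_nonneg (by positivity : (0:ℝ) ≤ α⁻¹)] at h
  have key : α⁻¹ * ‖gradient g w‖ ^ 2 - α / 2 * (α⁻¹ * ‖gradient g w‖) ^ 2
      = ‖gradient g w‖ ^ 2 / (2 * α) := by
    field_simp
    ring
  have hle : ‖gradient g w‖ ^ 2 / (2 * α) ≤ g w := by linarith
  rw [div_le_iff₀ (by positivity)] at hle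
  linarith
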